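/- Assume B̄A_Lip(2^ω). Then for every set B ⊆ ℕ → Bool of cardinality at most ℵ1 and every corset c : ℕ → ℕ (c is positive everywhere, nondecreasing, and tends to infinity), there is a sequence of trees Sₘ ⊆ List Bool (m : ℕ), each closed under taking prefixes and of width c (for each n, the number of elements of Sₘ of length n is at most c n), such that every x ∈ B is a branch of some Sₘ: there is m with [x 0, x 1, …, x (n-1)] ∈ Sₘ for every n. (By Shelah's characterization, this says every subset of 2^ω of size ℵ1 is null additive.) -/
import Mathlib


/-- A set `S` in a topological space is `ℵ₁`-dense if its intersection with every nonempty
open set has cardinality `ℵ₁`. -/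
def Aleph1Dense {Z : Type*} [TopologicalSpace Z] (S : Set Z) : Prop :=
  ∀ U : Set Z, IsOpen U → U.Nonempty → Cardinal.mk ↥(S ∩ U) = Cardinal.aleph 1

/-- `f` is Lipschitz: if `x` and `y` agree below `n` then so do `f x` and `f y`. -/
def IsLip {X : ℕ → Type*} (f : (∀ n, X n) → (∀ n, X n)) : Prop :=
  ∀ x y : ∀ n, X n, ∀ n : ℕ, (∀ i < n, x i = y i) → ∀ i < n, f x i = f y i

open Cardinal
open scoped Classical

/-- A sequence of positions which is strictly increasing, starts at least at `L`,
and dominates `M`. -/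
private def Npos (L : ℕ) (M : ℕ → ℕ) : ℕ → ℕ
  | 0 => max L (M 0)
  | k + 1 => max (Npos L M k + 1) (M (k + 1))

private lemma npos_strictMono (L : ℕ) (M : ℕ → ℕ) : StrictMono (Npos L M) :=
  strictMono_nat_of_lt_succ fun k =>
    lt_of_lt_of_le (Nat.lt_succ_self _) (le_max_left _ _)

private lemma le_npos (L : ℕ) (M : ℕ → ℕ) (k : ℕ) : k ≤ Npos L M k :=
  (npos_strictMono L M).le_apply

private lemma M_le_npos (L : ℕ) (M : ℕ → ℕ) (k : ℕ) : M k ≤ Npos L M k := by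
  cases k <;> simp [Npos]

private lemma L_le_npos (L : ℕ) (M : ℕ → ℕ) (k : ℕ) : L ≤ Npos L M k := by
  induction k with
  | zero => simp [Npos]
  | succ k ih =>
      exact ih.trans ((Nat.le_succ _).trans (le_max_left _ _))

/-- The embedding which writes `s` on the first `|s|` coordinates, the bits of `x` on
the positions `Npos s.length M k`, and `false` elsewhere. -/
private noncomputable def gmap (M : ℕ → ℕ) (s : List Bool) (x : ℕ → Bool) (i : ℕ) : Bool :=
  if hi : i < s.length then s.get ⟨i, hi⟩
  else if h : ∃ k, Npos s.length M k = i then x h.choose else false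

private lemma gmap_at (M : ℕ → ℕ) (s : List Bool) (x : ℕ → Bool) (k : ℕ) :
    gmap M s x (Npos s.length M k) = x k := by
  have h1 : ¬ (Npos s.length M k < s.length) := not_lt.mpr (L_le_npos _ _ _)
  have h2 : ∃ k', Npos s.length M k' = Npos s.length M k := ⟨k, rfl⟩
  rw [gmap, dif_neg h1, dif_pos h2]
  congr 1
  exact (npos_strictMono _ _).injective h2.choose_spec

private lemma gmap_inj (M : ℕ → ℕ) (s : List Bool) : Function.Injective (gmap M s) := by
  intro x y h
  funext k
  rw [← gmap_at M s x k, ← gmap_at M s y k, h]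

private lemma gmap_low (M : ℕ → ℕ) (s : List Bool) (x : ℕ → Bool) (i : ℕ)
    (hi : i < s.length) : gmap M s x i = s.get ⟨i, hi⟩ := by
  rw [gmap, dif_pos hi]

private lemma gmap_agree (M : ℕ → ℕ) (s : List Bool) (x y : ℕ → Bool) (n₀ : ℕ)
    (hxy : ∀ k, Npos s.length M k < n₀ → x k = y k) :
    ∀ i < n₀, gmap M s x i = gmap M s y i := by
  intro i hi
  by_cases h1 : i < s.length
  · rw [gmap_low M s x i h1, gmap_low M s y i h1]
  · by_cases h2 : ∃ k, Npos s.length M k = i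
    · rw [gmap, dif_neg h1, dif_pos h2, gmap, dif_neg h1, dif_pos h2]
      exact hxy _ (by rw [h2.choose_spec]; exact hi)
    · rw [gmap, dif_neg h1, dif_neg h2, gmap, dif_neg h1, dif_neg h2]

private lemma width_bound (c M : ℕ → ℕ) (hc1 : ∀ n, 1 ≤ c n) (hmono : Monotone c)
    (hM : ∀ k n, M k ≤ n → 2 ^ (k + 1) ≤ c n) (L n₀ : ℕ) :
    2 ^ ((Finset.range n₀).filter (fun k => Npos L M k < n₀)).card ≤ c n₀ := by
  set D := (Finset.range n₀).filter (fun k => Npos L M k < n₀) with hD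
  rcases D.eq_empty_or_nonempty with h | h
  · rw [h]; simpa using hc1 n₀
  · set k₀ := D.max' h with hk₀def
    have hk₀ : k₀ ∈ D := D.max'_mem h
    have hN : Npos L M k₀ < n₀ := (Finset.mem_filter.mp hk₀).2
    have hcard : D.card ≤ k₀ + 1 := by
      have hsub : D ⊆ Finset.range (k₀ + 1) := fun k hk =>
        Finset.mem_range.mpr (Nat.lt_succ_of_le (D.le_max' k hk))
      simpa using Finset.card_le_card hsub
    calc 2 ^ D.card ≤ 2 ^ (k₀ + 1) := Nat.pow_le_pow_right (by norm_num) hcard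
      _ ≤ c (Npos L M k₀) := hM k₀ _ (M_le_npos L M k₀)
      _ ≤ c n₀ := hmono hN.le

private lemma prefix_ofFn (l : List Bool) (k : ℕ) (y : ℕ → Bool)
    (h : l <+: List.ofFn fun j : Fin k => y j) :
    l = List.ofFn fun j : Fin l.length => y j := by
  apply List.ext_getElem (by simp)
  intro i h1 h2
  have := h.getElem h1
  simpa using this

private lemma cylinder_basis (U : Set (ℕ → Bool)) (hU : IsOpen U) (x : ℕ → Bool)
    (hx : x ∈ U) : ∃ n : ℕ, ∀ y : ℕ → Bool, (∀ i < n, y i = x i) → y ∈ U := by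
  obtain ⟨I, u, hu, hsub⟩ := isOpen_pi_iff.mp hU x hx
  refine ⟨(I.sup id) + 1, fun y hy => hsub ?_⟩
  intro i hi
  have : y i = x i := hy i (Nat.lt_succ_of_le (Finset.le_sup (f := id) hi))
  rw [this]; exact (hu i hi).2

/-- Under `B̄A_Lip(2^ω)`, every set `B ⊆ ℕ → Bool` of size at most `ℵ₁` can, for every
corset `c`, be covered by the branches of countably many prefix-closed trees of width `c`.
(By Shelah's characterization this says every such set is null additive.) -/
theorem stmt_16
    (hBA : ∀ A B : Set (ℕ → Bool), Aleph1Dense A → Aleph1Dense B →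
      ∃ f : ℕ → (ℕ → Bool) → (ℕ → Bool), (∀ n, IsLip (f n)) ∧ B = ⋃ n, f n '' A) :
    ∀ B : Set (ℕ → Bool), Cardinal.mk ↥B ≤ Cardinal.aleph 1 →
      ∀ c : ℕ → ℕ, (∀ n, 1 ≤ c n) → Monotone c →
        Filter.Tendsto c Filter.atTop Filter.atTop →
        ∃ S : ℕ → Set (List Bool),
          (∀ m : ℕ, ∀ l ∈ S m, ∀ l' : List Bool, l' <+: l → l' ∈ S m) ∧
          (∀ m n : ℕ, Cardinal.mk ↥{l ∈ S m | l.length = n} ≤ (c n : Cardinal)) ∧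
          (∀ x ∈ B, ∃ m : ℕ, ∀ n : ℕ, (List.ofFn fun i : Fin n => x i) ∈ S m) := by
  intro B hB c hc1 hmono htend
  -- choose the scale M
  have hex : ∀ k : ℕ, ∃ m : ℕ, ∀ n, m ≤ n → 2 ^ (k + 1) ≤ c n := by
    intro k
    obtain ⟨m, hm⟩ := (Filter.tendsto_atTop.mp htend (2 ^ (k + 1))).exists_forall_of_atTop
    exact ⟨m, hm⟩
  choose M hM using hex
  set g : List Bool → (ℕ → Bool) → (ℕ → Bool) := fun s => gmap M s with hg
  -- a set of size ℵ₁
  have h1 : Cardinal.aleph 1 ≤ #(ℕ → Bool) := by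
    calc aleph 1 ≤ continuum := aleph_one_le_continuum
      _ = #(ℕ → Bool) := by simp [mk_arrow]
  obtain ⟨Y, hY⟩ := Cardinal.le_mk_iff_exists_set.mp h1
  set A : Set (ℕ → Bool) := ⋃ s : List Bool, g s '' Y with hA
  -- every nonempty open set contains the image of some `g s`
  have hcyl : ∀ U : Set (ℕ → Bool), IsOpen U → U.Nonempty →
      ∃ s : List Bool, ∀ x : ℕ → Bool, g s x ∈ U := by
    intro U hU hne
    obtain ⟨x₀, hx₀⟩ := hne
    obtain ⟨n, hn⟩ := cylinder_basis U hU x₀ hx₀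
    refine ⟨List.ofFn fun i : Fin n => x₀ i, fun x => hn _ ?_⟩
    intro i hi
    have hi' : i < (List.ofFn fun j : Fin n => x₀ j).length := by simpa using hi
    show gmap M _ x i = x₀ i
    rw [gmap_low M _ x i hi']
    simp
  -- the size of A
  have hmkA : #↥A ≤ aleph 1 := by
    refine (Cardinal.mk_iUnion_le _).trans ?_
    have e1 : #(List Bool) = Cardinal.aleph0 := Cardinal.mk_eq_aleph0 _
    have e2 : (⨆ s : List Bool, #↥(g s '' Y)) ≤ aleph 1 :=
      ciSup_le' fun s => (Cardinal.mk_image_le).trans_eq hY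
    calc #(List Bool) * (⨆ s : List Bool, #↥(g s '' Y))
        ≤ Cardinal.aleph0 * aleph 1 := by
          exact mul_le_mul' e1.le e2
      _ = aleph 1 := Cardinal.aleph0_mul_eq (aleph0_le_aleph 1)
  -- lower bound on intersections with open sets
  have hlow : ∀ U : Set (ℕ → Bool), IsOpen U → U.Nonempty →
      aleph 1 ≤ #↥(A ∩ U) := by
    intro U hU hne
    obtain ⟨s, hs⟩ := hcyl U hU hne
    have hinj : Function.Injective (fun y : ↥Y => (⟨g s y, by
        constructor
        · exact Set.mem_iUnion.mpr ⟨s, Set.mem_image_of_mem _ y.2⟩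
        · exact hs y⟩ : ↥(A ∩ U))) := by
      intro y₁ y₂ h
      have := congrArg Subtype.val h
      exact Subtype.ext (gmap_inj M s this)
    calc aleph 1 = #↥Y := hY.symm
      _ ≤ #↥(A ∩ U) := Cardinal.mk_le_of_injective hinj
  have hdenseA : Aleph1Dense A := by
    intro U hU hne
    refine le_antisymm ?_ (hlow U hU hne)
    exact (Cardinal.mk_le_mk_of_subset Set.inter_subset_left).trans hmkA
  have hdenseBA : Aleph1Dense (B ∪ A) := by
    intro U hU hne
    refine le_antisymm ?_ ?_
    · refine (Cardinal.mk_le_mk_of_subset Set.inter_subset_left).trans ?_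
      refine (Cardinal.mk_union_le _ _).trans ?_
      calc #↥B + #↥A ≤ aleph 1 + aleph 1 := add_le_add hB hmkA
        _ = aleph 1 := Cardinal.add_eq_self (aleph0_le_aleph 1)
    · refine (hlow U hU hne).trans (Cardinal.mk_le_mk_of_subset ?_)
      exact Set.inter_subset_inter_left U Set.subset_union_right
  -- apply the axiom
  obtain ⟨f, hfLip, hfcov⟩ := hBA A (B ∪ A) hdenseA hdenseBA
  obtain ⟨e, he⟩ := exists_surjective_nat (ℕ × List Bool)
  -- the trees
  set T : ℕ → List Bool → Set (List Bool) := fun n s =>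
    {l | ∃ x : ℕ → Bool, l = List.ofFn fun i : Fin l.length => f n (g s x) i} with hT
  refine ⟨fun m => T (e m).1 (e m).2, ?_, ?_, ?_⟩
  · -- prefix closed
    rintro m l ⟨x, hx⟩ l' hl'
    refine ⟨x, ?_⟩
    rw [hx] at hl'
    exact prefix_ofFn l' _ _ hl'
  · -- width
    intro m n₀
    set n := (e m).1
    set s := (e m).2
    set D := (Finset.range n₀).filter (fun k => Npos s.length M k < n₀) with hD
    have hmemD : ∀ k, Npos s.length M k < n₀ → k ∈ D := by
      intro k hk
      exact Finset.mem_filter.mpr ⟨Finset.mem_range.mpr ((le_npos _ _ _).trans_lt hk), hk⟩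
    set ext : (↥D → Bool) → ℕ → Bool := fun v k => if h : k ∈ D then v ⟨k, h⟩ else false
      with hext
    -- agreement: pref n₀ (f n (g s x)) depends only on x restricted to D
    have hkey : ∀ (x : ℕ → Bool),
        (List.ofFn fun i : Fin n₀ => f n (g s (ext (fun k => x k.1))) i) =
        (List.ofFn fun i : Fin n₀ => f n (g s x) i) := by
      intro x
      have hag : ∀ i < n₀, g s (ext (fun k => x k.1)) i = g s x i := by
        apply gmap_agree
        intro k hk
        rw [hext]
        simp only [dif_pos (hmemD k hk)]
      have := hfLip n _ _ n₀ hag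
      apply List.ext_getElem (by simp)
      intro i h1 h2
      simp only [List.getElem_ofFn]
      exact this _ (by simpa using h1)
    have hsurj : ∃ φ : (↥D → Bool) → ↥{l ∈ T n s | l.length = n₀}, Function.Surjective φ := by
      refine ⟨fun v => ⟨List.ofFn fun i : Fin n₀ => f n (g s (ext v)) i, ⟨ext v, by simp⟩,
        by simp⟩, ?_⟩
      rintro ⟨l, ⟨x, hx⟩, hlen⟩
      refine ⟨fun k => x k.1, ?_⟩
      apply Subtype.ext
      simp only
      rw [hkey x, hx, hlen]
    obtain ⟨φ, hφ⟩ := hsurj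
    calc #↥{l ∈ T n s | l.length = n₀} ≤ #(↥D → Bool) := Cardinal.mk_le_of_surjective hφ
      _ = ((2 ^ D.card : ℕ) : Cardinal) := by
          rw [Cardinal.mk_fintype]
          simp [Fintype.card_fun]
      _ ≤ (c n₀ : Cardinal) := by
          exact_mod_cast width_bound c M hc1 hmono hM s.length n₀
  · -- coverage
    intro x hx
    have hx' : x ∈ ⋃ n, f n '' A := by rw [← hfcov]; exact Or.inl hx
    obtain ⟨n, a, haA, hfa⟩ := Set.mem_iUnion.mp hx'
    obtain ⟨s, y, _, hgy⟩ := Set.mem_iUnion.mp haA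
    obtain ⟨m, hm⟩ := he (n, s)
    refine ⟨m, fun k => ?_⟩
    show (List.ofFn fun i : Fin k => x i) ∈ T (e m).1 (e m).2
    rw [hm]
    refine ⟨y, ?_⟩
    have : f n (g s y) = x := by rw [hgy]; exact hfa
    rw [this]
    apply List.ext_getElem (by simp)
    intro i h1 h2
    simp
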